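/- Let (A,∘,[·,·]) be a Gel'fand-Dorfman bialgebra over K of codimension 1 in a vector space E. Assume the Lie algebra (A,[·,·]) is perfect, i.e. [A,A] = A, and that every derivation of the Lie algebra (A,[·,·]) is inner (of the form [a0,·] for some a0 ∈ A). Then Extd(E,A) is in bijection with SF4(A)/≡, where SF4(A) is the set of GD flag datums with p = q = η = 0 and D = 0, written (S,T,a1,k), and (S,T,a1,k) ≡ (S',T',a1',k') iff there exists (a0,β) ∈ A × K* with S(a) = βS'(a) + a0∘a for all a, T(a) = βT'(a) + a∘a0 for all a, a1 = a0∘a0 + βS'(a0) + βT'(a0) + β²a1' − k a0, k = βk', and [a0,a] = 0 for all a ∈ A. -/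

import Mathlib

namespace GDExt

def IsNovikov {M : Type*} [AddCommGroup M] (mul : M → M → M) : Prop :=
  (∀ a b c, mul (mul a b) c - mul a (mul b c) = mul (mul b a) c - mul b (mul a c)) ∧
  ∀ a b c, mul (mul a b) c = mul (mul a c) b

def IsLieBracket {M : Type*} [AddCommGroup M] (br : M → M → M) : Prop :=
  (∀ a, br a a = 0) ∧ ∀ a b c, br a (br b c) = br (br a b) c + br b (br a c)

def IsGD {M : Type*} [AddCommGroup M] (mul br : M → M → M) : Prop :=
  IsNovikov mul ∧ IsLieBracket br ∧
  ∀ a b c, br a (mul b c) - br c (mul b a) + mul (br b a) c - mul (br b c) a - mul b (br a c) = 0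

variable {K : Type*} [Field K]
variable {A V : Type*} [AddCommGroup A] [Module K A] [AddCommGroup V] [Module K V]

/-- First component bilinear product of the unified product `A ♮ V`. -/
def uniMul (circ : A →ₗ[K] A →ₗ[K] A) (lA rA : A →ₗ[K] Module.End K V)
    (lV rV : V →ₗ[K] Module.End K A) (f : V →ₗ[K] V →ₗ[K] A)
    (st : V →ₗ[K] V →ₗ[K] V) : A × V → A × V → A × V :=
  fun p q =>
    (circ p.1 q.1 + lV p.2 q.1 + rV q.2 p.1 + f p.2 q.2,
     st p.2 q.2 + lA p.1 q.2 + rA q.1 p.2)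

/-- Bracket of the unified product `A ♮ V`. -/
def uniBr (brk : A →ₗ[K] A →ₗ[K] A) (tl : V →ₗ[K] A →ₗ[K] V) (tr : V →ₗ[K] A →ₗ[K] A)
    (hm : V →ₗ[K] V →ₗ[K] A) (vbr : V →ₗ[K] V →ₗ[K] V) : A × V → A × V → A × V :=
  fun p q =>
    (brk p.1 q.1 + tr p.2 q.1 - tr q.2 p.1 + hm p.2 q.2,
     vbr p.2 q.2 + tl p.2 q.1 - tl q.2 p.1)

end GDExt

namespace GDExt

variable (K : Type*) [Field K]
variable (A : Type*) [AddCommGroup A] [Module K A]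

/-- The data of a Gel'fand-Dorfman flag datum. -/
structure FlagData where
  p : A →ₗ[K] K
  q : A →ₗ[K] K
  S : A →ₗ[K] A
  T : A →ₗ[K] A
  a1 : A
  k : K
  eta : A →ₗ[K] K
  D : A →ₗ[K] A

variable {K A}

/-- Conditions (FN1)-(FN10), (TD1)-(TD2) and (GF1)-(GF6) for a GD flag datum of the
GD bialgebra `(A, circ, brk)`. -/
def IsFlagDatum (circ brk : A →ₗ[K] A →ₗ[K] A) (d : FlagData K A) : Prop :=
  -- (FN1)
  (∀ a b : A, d.p (circ a b) = d.p (circ b a)) ∧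
  (∀ a b : A, d.q (circ a b) = d.q a * d.q b) ∧
  -- (FN2)
  (∀ a b : A, d.S (circ a b) = circ (d.S a) b + circ a (d.S b) + (d.q a - d.p a) • d.S b
      + d.q b • d.T a - circ (d.T a) b) ∧
  -- (FN3)
  (∀ a b : A, d.T (circ a b) - d.T (circ b a)
      = d.p b • d.T a - d.p a • d.T b + circ a (d.T b) - circ b (d.T a)) ∧
  -- (FN4)
  (∀ a : A, d.T (d.T a) = d.T (d.S a) - d.S (d.T a) + circ a d.a1
      + (d.q a - 2 * d.p a) • d.a1 + d.k • d.T a) ∧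
  -- (FN5)
  (∀ a : A, d.p (d.S a) - d.p (d.T a) = d.q (d.T a) + d.k * (d.p a - d.q a)) ∧
  -- (FN6)
  (∀ a b : A, circ (d.S a) b + d.q a • d.S b = circ (d.S b) a + d.q b • d.S a) ∧
  -- (FN7)
  (∀ a b : A, d.T (circ a b) = circ (d.T a) b + d.p a • d.S b) ∧
  -- (FN8)
  (∀ a b : A, d.p (circ a b) = d.p a * d.q b) ∧
  -- (FN9)
  (∀ a : A, d.T (d.S a) = circ d.a1 a + d.k • d.S a - d.q a • d.a1) ∧
  -- (FN10)
  (∀ a : A, d.p (d.S a) = 0) ∧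
  -- (TD1)
  (∀ a b : A, d.eta (brk a b) = 0) ∧
  -- (TD2)
  (∀ a b : A, d.D (brk a b) = brk (d.D a) b + brk a (d.D b) + d.eta a • d.D b - d.eta b • d.D a) ∧
  -- (GF1)
  (∀ a b : A, brk a (d.T b) - d.p b • d.D a - d.D (circ b a) + d.T (brk b a)
      + circ (d.D b) a + d.eta b • d.S a + circ b (d.D a) + d.eta a • d.T b = 0) ∧
  -- (GF2)
  (∀ a b : A, d.p (brk b a) + d.eta b * d.q a - d.eta (circ b a) = 0) ∧
  -- (GF3)
  (∀ a b : A, brk a (d.S b) - d.q b • d.D a - brk b (d.S a) + d.q a • d.D b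
      + circ (d.D a) b + d.eta a • d.S b - circ (d.D b) a - d.eta b • d.S a
      - d.S (brk a b) = 0) ∧
  -- (GF4)
  (∀ a b : A, d.q (brk a b) = 0) ∧
  -- (GF5)
  (∀ a : A, brk a d.a1 - d.k • d.D a - d.D (d.S a) + d.T (d.D a)
      + (2 * d.eta a) • d.a1 + d.S (d.D a) = 0) ∧
  -- (GF6)
  (∀ a : A, d.k * d.eta a - d.eta (d.S a) + d.p (d.D a) + d.q (d.D a) = 0)

end GDExt

namespace GDExt

variable {K E : Type*} [Field K] [AddCommGroup E] [Module K E]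

/-- The GD bialgebra structures on `E` containing the GD bialgebra `(A, circ, brk)`
as a subalgebra (i.e. restricting to the given operations on `A`). -/
def GDStrOn (A : Submodule K E) (circ brk : ↥A →ₗ[K] ↥A →ₗ[K] ↥A) : Type _ :=
  {s : (E →ₗ[K] E →ₗ[K] E) × (E →ₗ[K] E →ₗ[K] E) //
    IsGD (fun u v => s.1 u v) (fun u v => s.2 u v) ∧
    ∀ a b : ↥A, s.1 a b = ((circ a b : ↥A) : E) ∧ s.2 a b = ((brk a b : ↥A) : E)}

/-- Equivalence of GD bialgebra structures on `E` containing `A` as a subalgebra: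
there is a GD bialgebra isomorphism whose restriction to `A` is the identity. -/
def GDStrEquiv (A : Submodule K E) (circ brk : ↥A →ₗ[K] ↥A →ₗ[K] ↥A)
    (s s' : GDStrOn A circ brk) : Prop :=
  ∃ φ : E ≃ₗ[K] E,
    (∀ u v : E, φ (s.1.1 u v) = s'.1.1 (φ u) (φ v)) ∧
    (∀ u v : E, φ (s.1.2 u v) = s'.1.2 (φ u) (φ v)) ∧
    (∀ a : ↥A, φ (a : E) = (a : E))

end GDExt

namespace GDExt

end GDExt

namespace GDExt

section AuxDecomp
variable {K E : Type*} [Field K] [AddCommGroup E] [Module K E]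
variable {A : Submodule K E} {x : E}

noncomputable def pr (hc : IsCompl A (K ∙ x)) : E →ₗ[K] A := A.linearProjOfIsCompl _ hc

noncomputable def co (hx0 : x ≠ 0) (hc : IsCompl A (K ∙ x)) : E →ₗ[K] K :=
  (LinearEquiv.toSpanNonzeroSingleton K E x hx0).symm.toLinearMap ∘ₗ
    ((K ∙ x).linearProjOfIsCompl A hc.symm)

variable (hx0 : x ≠ 0) (hc : IsCompl A (K ∙ x))

lemma decomp (e : E) : ((pr hc e : A) : E) + co hx0 hc e • x = e := by
  have h := Submodule.projection_add_projection_eq_self hc e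
  have h2 : co hx0 hc e • x = (((K ∙ x).linearProjOfIsCompl A hc.symm e : (K ∙ x)) : E) := by
    have := (LinearEquiv.toSpanNonzeroSingleton K E x hx0).apply_symm_apply
      ((K ∙ x).linearProjOfIsCompl A hc.symm e)
    calc co hx0 hc e • x
        = ((LinearEquiv.toSpanNonzeroSingleton K E x hx0)
            ((LinearEquiv.toSpanNonzeroSingleton K E x hx0).symm
              ((K ∙ x).linearProjOfIsCompl A hc.symm e)) : E) := rfl
      _ = _ := by rw [this]
  rw [h2]; exact h

@[simp] lemma pr_coe (a : A) : pr hc (a : E) = a :=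
  Submodule.linearProjOfIsCompl_apply_left hc a

@[simp] lemma pr_x : pr hc x = 0 :=
  Submodule.linearProjOfIsCompl_apply_right hc ⟨x, Submodule.mem_span_singleton_self x⟩

@[simp] lemma co_coe (a : A) : co hx0 hc (a : E) = 0 := by
  unfold co
  have : ((K ∙ x).linearProjOfIsCompl A hc.symm) (a : E) = 0 :=
    Submodule.linearProjOfIsCompl_apply_right hc.symm a
  simp [this]

@[simp] lemma co_x : co hx0 hc x = 1 := by
  unfold co
  have h1 : ((K ∙ x).linearProjOfIsCompl A hc.symm) x
      = ⟨x, Submodule.mem_span_singleton_self x⟩ :=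
    Submodule.linearProjOfIsCompl_apply_left hc.symm ⟨x, Submodule.mem_span_singleton_self x⟩
  have h2 : (LinearEquiv.toSpanNonzeroSingleton K E x hx0) 1
      = ⟨x, Submodule.mem_span_singleton_self x⟩ := by
    apply Subtype.ext; show (1 : K) • x = x; simp
  simp only [LinearMap.comp_apply, h1, LinearEquiv.coe_coe, ← h2,
    LinearEquiv.symm_apply_apply]

lemma mem_iff (e : E) : e ∈ A ↔ co hx0 hc e = 0 := by
  constructor
  · intro h; exact co_coe hx0 hc ⟨e, h⟩
  · intro h
    have := decomp hx0 hc e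
    rw [h, zero_smul, add_zero] at this
    rw [← this]; exact (pr hc e).2

lemma eq_of_decomp' {z : E} (hz : z ∉ A) {a b : A} {s t : K}
    (h : (a : E) + s • z = (b : E) + t • z) : a = b ∧ s = t := by
  have hst : s = t := by
    by_contra hne
    have hz' : z = (s - t)⁻¹ • ((b : E) - (a : E)) := by
      have h2 : (s - t) • z = (b : E) - (a : E) := by
        rw [sub_smul]; linear_combination (norm := module) h
      rw [← h2, smul_smul, inv_mul_cancel₀ (sub_ne_zero.mpr hne), one_smul]
    exact hz (hz' ▸ A.smul_mem _ (A.sub_mem b.2 a.2))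
  refine ⟨Subtype.ext ?_, hst⟩
  rw [hst] at h
  exact add_right_cancel h

end AuxDecomp

section AuxFlag
variable {K : Type*} [Field K] {A : Type*} [AddCommGroup A] [Module K A]

/-- The reduced flag conditions for a datum with `p = q = eta = 0` and `D = 0`. -/
lemma reduced_conditions (circ brk : A →ₗ[K] A →ₗ[K] A) (d : FlagData K A)
    (hd : IsFlagDatum circ brk d)
    (hp : d.p = 0) (hq : d.q = 0) (he : d.eta = 0) (hD : d.D = 0) :
    (∀ a b : A, d.S (circ a b) = circ (d.S a) b + circ a (d.S b) - circ (d.T a) b) ∧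
    (∀ a b : A, d.T (circ a b) - d.T (circ b a) = circ a (d.T b) - circ b (d.T a)) ∧
    (∀ a : A, d.T (d.T a) = d.T (d.S a) - d.S (d.T a) + circ a d.a1 + d.k • d.T a) ∧
    (∀ a b : A, circ (d.S a) b = circ (d.S b) a) ∧
    (∀ a b : A, d.T (circ a b) = circ (d.T a) b) ∧
    (∀ a : A, d.T (d.S a) = circ d.a1 a + d.k • d.S a) ∧
    (∀ a b : A, brk a (d.T b) + d.T (brk b a) = 0) ∧
    (∀ a b : A, brk a (d.S b) - brk b (d.S a) - d.S (brk a b) = 0) ∧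
    (∀ a : A, brk a d.a1 = 0) := by
  obtain ⟨f1, f1', f2, f3, f4, f5, f6, f7, f8, f9, f10, t1, t2, g1, g2, g3, g4, g5, g6⟩ := hd
  refine ⟨?_, ?_, ?_, ?_, ?_, ?_, ?_, ?_, ?_⟩
  · intro a b; simpa [hp, hq] using f2 a b
  · intro a b; simpa [hp] using f3 a b
  · intro a; simpa [hp, hq] using f4 a
  · intro a b; simpa [hq] using f6 a b
  · intro a b; simpa [hp] using f7 a b
  · intro a; simpa [hq] using f9 a
  · intro a b; simpa [hp, he, hD] using g1 a b
  · intro a b; simpa [hq, he, hD] using g3 a b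
  · intro a; simpa [he, hD] using g5 a

/-- Building a flag datum with `p = q = eta = 0`, `D = 0` from the reduced conditions. -/
lemma isFlagDatum_of (circ brk : A →ₗ[K] A →ₗ[K] A) (S T : A →ₗ[K] A) (a1 : A) (k : K)
    (h2 : ∀ a b : A, S (circ a b) = circ (S a) b + circ a (S b) - circ (T a) b)
    (h3 : ∀ a b : A, T (circ a b) - T (circ b a) = circ a (T b) - circ b (T a))
    (h4 : ∀ a : A, T (T a) = T (S a) - S (T a) + circ a a1 + k • T a)
    (h6 : ∀ a b : A, circ (S a) b = circ (S b) a)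
    (h7 : ∀ a b : A, T (circ a b) = circ (T a) b)
    (h9 : ∀ a : A, T (S a) = circ a1 a + k • S a)
    (g1 : ∀ a b : A, brk a (T b) + T (brk b a) = 0)
    (g3 : ∀ a b : A, brk a (S b) - brk b (S a) - S (brk a b) = 0)
    (g5 : ∀ a : A, brk a a1 = 0) :
    IsFlagDatum circ brk ⟨0, 0, S, T, a1, k, 0, 0⟩ := by
  refine ⟨?_, ?_, ?_, ?_, ?_, ?_, ?_, ?_, ?_, ?_, ?_, ?_, ?_, ?_, ?_, ?_, ?_, ?_, ?_⟩
  · intro a b; simp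
  · intro a b; simp
  · intro a b; simpa using h2 a b
  · intro a b; simpa using h3 a b
  · intro a; simpa using h4 a
  · intro a; simp
  · intro a b; simpa using h6 a b
  · intro a b; simpa using h7 a b
  · intro a b; simp
  · intro a; simpa using h9 a
  · intro a; simp
  · intro a b; simp
  · intro a b; simp
  · intro a b; simpa using g1 a b
  · intro a b; simp
  · intro a b; simpa using g3 a b
  · intro a b; simp
  · intro a; simpa using g5 a
  · intro a; simp

end AuxFlag

section Phi
variable {K E : Type*} [Field K] [AddCommGroup E] [Module K E]
variable {A : Submodule K E} {x : E}
variable (hx0 : x ≠ 0) (hc : IsCompl A (K ∙ x))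
variable (circ brk : ↥A →ₗ[K] ↥A →ₗ[K] ↥A) (S T : ↥A →ₗ[K] ↥A) (a1 : ↥A) (k : K)

noncomputable def phiMul : E →ₗ[K] E →ₗ[K] E :=
  LinearMap.mk₂ K (fun u v =>
    ((circ (pr hc u) (pr hc v) : A) : E) + co hx0 hc u • ((S (pr hc v) : A) : E)
      + co hx0 hc v • ((T (pr hc u) : A) : E)
      + (co hx0 hc u * co hx0 hc v) • (((a1 : E)) + k • x))
    (by intro u u' v; simp [map_add, add_mul, add_smul]; try module)
    (by intro c u v; simp [map_smul, smul_smul, mul_assoc]; try module)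
    (by intro u v v'; simp [map_add, mul_add, add_smul]; try module)
    (by intro c u v; simp [map_smul, smul_smul]; try ring_nf; try module)

noncomputable def phiBr : E →ₗ[K] E →ₗ[K] E :=
  LinearMap.mk₂ K (fun u v => ((brk (pr hc u) (pr hc v) : A) : E))
    (by intro u u' v; simp [map_add])
    (by intro c u v; simp [map_smul])
    (by intro u v v'; simp [map_add])
    (by intro c u v; simp [map_smul])

@[simp] lemma phiMul_cc (a b : A) :
    phiMul hx0 hc circ S T a1 k (a : E) (b : E) = ((circ a b : A) : E) := by simp [phiMul]
@[simp] lemma phiMul_xc (a : A) :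
    phiMul hx0 hc circ S T a1 k x (a : E) = ((S a : A) : E) := by simp [phiMul]
@[simp] lemma phiMul_cx (a : A) :
    phiMul hx0 hc circ S T a1 k (a : E) x = ((T a : A) : E) := by simp [phiMul]
@[simp] lemma phiMul_xx :
    phiMul hx0 hc circ S T a1 k x x = (a1 : E) + k • x := by simp [phiMul]
@[simp] lemma phiBr_cc (a b : A) :
    phiBr hc brk (a : E) (b : E) = ((brk a b : A) : E) := by simp [phiBr]
@[simp] lemma phiBr_xc (a : A) : phiBr hc brk x (a : E) = 0 := by simp [phiBr]
@[simp] lemma phiBr_cx (a : A) : phiBr hc brk (a : E) x = 0 := by simp [phiBr]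
@[simp] lemma phiBr_xx : phiBr hc brk x x = 0 := by simp [phiBr]

lemma phi_isGD
    (hGD : IsGD (fun a b : ↥A => circ a b) (fun a b : ↥A => brk a b))
    (h2 : ∀ a b : A, S (circ a b) = circ (S a) b + circ a (S b) - circ (T a) b)
    (h3 : ∀ a b : A, T (circ a b) - T (circ b a) = circ a (T b) - circ b (T a))
    (h4 : ∀ a : A, T (T a) = T (S a) - S (T a) + circ a a1 + k • T a)
    (h6 : ∀ a b : A, circ (S a) b = circ (S b) a)
    (h7 : ∀ a b : A, T (circ a b) = circ (T a) b)
    (h9 : ∀ a : A, T (S a) = circ a1 a + k • S a)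
    (g1 : ∀ a b : A, brk a (T b) + T (brk b a) = 0)
    (g3 : ∀ a b : A, brk a (S b) - brk b (S a) - S (brk a b) = 0)
    (g5 : ∀ a : A, brk a a1 = 0) :
    IsGD (fun u v => phiMul hx0 hc circ S T a1 k u v) (fun u v => phiBr hc brk u v) := by
  obtain ⟨⟨aN1, aN2⟩, ⟨aAlt, aJac⟩, aC⟩ := hGD
  have eN1 : ∀ a b c : A, ((circ (circ a b) c : A) : E) - ((circ a (circ b c) : A) : E)
      = ((circ (circ b a) c : A) : E) - ((circ b (circ a c) : A) : E) := fun a b c => by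
    exact_mod_cast congrArg Subtype.val (aN1 a b c)
  have eN2 : ∀ a b c : A, ((circ (circ a b) c : A) : E) = ((circ (circ a c) b : A) : E) :=
    fun a b c => congrArg Subtype.val (aN2 a b c)
  have e2 : ∀ a b : A, ((S (circ a b) : A) : E)
      = ((circ (S a) b : A) : E) + ((circ a (S b) : A) : E) - ((circ (T a) b : A) : E) :=
    fun a b => by exact_mod_cast congrArg Subtype.val (h2 a b)
  have e3 : ∀ a b : A, ((T (circ a b) : A) : E) - ((T (circ b a) : A) : E)
      = ((circ a (T b) : A) : E) - ((circ b (T a) : A) : E) :=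
    fun a b => by exact_mod_cast congrArg Subtype.val (h3 a b)
  have e4 : ∀ a : A, ((T (T a) : A) : E) = ((T (S a) : A) : E) - ((S (T a) : A) : E)
      + ((circ a a1 : A) : E) + k • ((T a : A) : E) :=
    fun a => by exact_mod_cast congrArg Subtype.val (h4 a)
  have e6 : ∀ a b : A, ((circ (S a) b : A) : E) = ((circ (S b) a : A) : E) :=
    fun a b => congrArg Subtype.val (h6 a b)
  have e7 : ∀ a b : A, ((T (circ a b) : A) : E) = ((circ (T a) b : A) : E) :=
    fun a b => congrArg Subtype.val (h7 a b)
  have e9 : ∀ a : A, ((T (S a) : A) : E) = ((circ a1 a : A) : E) + k • ((S a : A) : E) :=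
    fun a => by exact_mod_cast congrArg Subtype.val (h9 a)
  have eg1 : ∀ a b : A, ((brk a (T b) : A) : E) + ((T (brk b a) : A) : E) = 0 :=
    fun a b => by exact_mod_cast congrArg Subtype.val (g1 a b)
  have eg3 : ∀ a b : A, ((brk a (S b) : A) : E) - ((brk b (S a) : A) : E)
      - ((S (brk a b) : A) : E) = 0 :=
    fun a b => by exact_mod_cast congrArg Subtype.val (g3 a b)
  have eg5 : ∀ a : A, ((brk a a1 : A) : E) = 0 :=
    fun a => by exact_mod_cast congrArg Subtype.val (g5 a)
  have eJ : ∀ a b c : A, ((brk a (brk b c) : A) : E)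
      = ((brk (brk a b) c : A) : E) + ((brk b (brk a c) : A) : E) :=
    fun a b c => by exact_mod_cast congrArg Subtype.val (aJac a b c)
  have eC : ∀ a b c : A, ((brk a (circ b c) : A) : E) - ((brk c (circ b a) : A) : E)
      + ((circ (brk b a) c : A) : E) - ((circ (brk b c) a : A) : E)
      - ((circ b (brk a c) : A) : E) = 0 :=
    fun a b c => by exact_mod_cast congrArg Subtype.val (aC a b c)
  refine ⟨⟨?_, ?_⟩, ⟨?_, ?_⟩, ?_⟩
  · -- Novikov 1
    have key : ∀ (a b c : A) (s t r : K),
        phiMul hx0 hc circ S T a1 k (phiMul hx0 hc circ S T a1 k ((a:E)+s•x) ((b:E)+t•x)) ((c:E)+r•x)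
          - phiMul hx0 hc circ S T a1 k ((a:E)+s•x) (phiMul hx0 hc circ S T a1 k ((b:E)+t•x) ((c:E)+r•x))
        = phiMul hx0 hc circ S T a1 k (phiMul hx0 hc circ S T a1 k ((b:E)+t•x) ((a:E)+s•x)) ((c:E)+r•x)
          - phiMul hx0 hc circ S T a1 k ((b:E)+t•x) (phiMul hx0 hc circ S T a1 k ((a:E)+s•x) ((c:E)+r•x)) := by
      intro a b c s t r
      simp only [map_add, map_smul, LinearMap.add_apply, LinearMap.smul_apply,
        phiMul_cc, phiMul_xc, phiMul_cx, phiMul_xx, smul_add, smul_smul]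
      linear_combination (norm := module) eN1 a b c - s • e2 b c + t • e2 a c + r • e3 a b
        - (s*r) • e4 b + (t*r) • e4 a
    intro u v w
    have h := key (pr hc u) (pr hc v) (pr hc w) (co hx0 hc u) (co hx0 hc v) (co hx0 hc w)
    simpa only [decomp hx0 hc u, decomp hx0 hc v, decomp hx0 hc w] using h
  · -- Novikov 2
    have key : ∀ (a b c : A) (s t r : K),
        phiMul hx0 hc circ S T a1 k (phiMul hx0 hc circ S T a1 k ((a:E)+s•x) ((b:E)+t•x)) ((c:E)+r•x)
        = phiMul hx0 hc circ S T a1 k (phiMul hx0 hc circ S T a1 k ((a:E)+s•x) ((c:E)+r•x)) ((b:E)+t•x) := by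
      intro a b c s t r
      simp only [map_add, map_smul, LinearMap.add_apply, LinearMap.smul_apply,
        phiMul_cc, phiMul_xc, phiMul_cx, phiMul_xx, smul_add, smul_smul]
      linear_combination (norm := module) eN2 a b c + s • e6 b c - t • e7 a c + r • e7 a b
        - (s*t) • e9 c + (s*r) • e9 b
    intro u v w
    have h := key (pr hc u) (pr hc v) (pr hc w) (co hx0 hc u) (co hx0 hc v) (co hx0 hc w)
    simpa only [decomp hx0 hc u, decomp hx0 hc v, decomp hx0 hc w] using h
  · -- alternating
    intro u
    have key : ∀ (a : A) (s : K),
        phiBr hc brk ((a:E)+s•x) ((a:E)+s•x) = 0 := by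
      intro a s
      simp only [map_add, map_smul, LinearMap.add_apply, LinearMap.smul_apply,
        phiBr_cc, phiBr_xc, phiBr_cx, phiBr_xx, smul_zero, add_zero, zero_add]
      exact_mod_cast congrArg Subtype.val (aAlt a)
    have h := key (pr hc u) (co hx0 hc u)
    simpa only [decomp hx0 hc u] using h
  · -- Jacobi
    have key : ∀ (a b c : A) (s t r : K),
        phiBr hc brk ((a:E)+s•x) (phiBr hc brk ((b:E)+t•x) ((c:E)+r•x))
        = phiBr hc brk (phiBr hc brk ((a:E)+s•x) ((b:E)+t•x)) ((c:E)+r•x)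
          + phiBr hc brk ((b:E)+t•x) (phiBr hc brk ((a:E)+s•x) ((c:E)+r•x)) := by
      intro a b c s t r
      simp only [map_add, map_smul, LinearMap.add_apply, LinearMap.smul_apply,
        phiBr_cc, phiBr_xc, phiBr_cx, phiBr_xx, smul_zero, add_zero, zero_add,
        map_zero, LinearMap.zero_apply, smul_add]
      exact eJ a b c
    intro u v w
    have h := key (pr hc u) (pr hc v) (pr hc w) (co hx0 hc u) (co hx0 hc v) (co hx0 hc w)
    simpa only [decomp hx0 hc u, decomp hx0 hc v, decomp hx0 hc w] using h
  · -- compatibility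
    have key : ∀ (a b c : A) (s t r : K),
        phiBr hc brk ((a:E)+s•x) (phiMul hx0 hc circ S T a1 k ((b:E)+t•x) ((c:E)+r•x))
          - phiBr hc brk ((c:E)+r•x) (phiMul hx0 hc circ S T a1 k ((b:E)+t•x) ((a:E)+s•x))
          + phiMul hx0 hc circ S T a1 k (phiBr hc brk ((b:E)+t•x) ((a:E)+s•x)) ((c:E)+r•x)
          - phiMul hx0 hc circ S T a1 k (phiBr hc brk ((b:E)+t•x) ((c:E)+r•x)) ((a:E)+s•x)
          - phiMul hx0 hc circ S T a1 k ((b:E)+t•x) (phiBr hc brk ((a:E)+s•x) ((c:E)+r•x)) = 0 := by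
      intro a b c s t r
      simp only [map_add, map_smul, LinearMap.add_apply, LinearMap.smul_apply,
        phiMul_cc, phiMul_xc, phiMul_cx, phiMul_xx,
        phiBr_cc, phiBr_xc, phiBr_cx, phiBr_xx, smul_zero, add_zero, zero_add,
        map_zero, LinearMap.zero_apply, smul_add, smul_smul]
      linear_combination (norm := module) eC a b c + t • eg3 a c + r • eg1 a b
        - s • eg1 c b + (t*r) • eg5 a - (t*s) • eg5 c
    intro u v w
    have h := key (pr hc u) (pr hc v) (pr hc w) (co hx0 hc u) (co hx0 hc v) (co hx0 hc w)
    simpa only [decomp hx0 hc u, decomp hx0 hc v, decomp hx0 hc w] using h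
end Phi

section Psi
variable {K E : Type*} [Field K] [AddCommGroup E] [Module K E]
variable {A : Submodule K E} {x : E}

lemma extract (hx0 : x ≠ 0) (hc : IsCompl A (K ∙ x))
    (circ brk : ↥A →ₗ[K] ↥A →ₗ[K] ↥A)
    (mulE brE : E →ₗ[K] E →ₗ[K] E)
    (hsGD : IsGD (fun u v => mulE u v) (fun u v => brE u v))
    (hres : ∀ a b : ↥A, mulE a b = ((circ a b : ↥A) : E) ∧ brE a b = ((brk a b : ↥A) : E))
    (hperf : Submodule.span K {c : ↥A | ∃ a b : ↥A, c = brk a b} = ⊤)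
    (hder : ∀ D : ↥A →ₗ[K] ↥A,
      (∀ a b : ↥A, D (brk a b) = brk (D a) b + brk a (D b)) →
      ∃ a0 : ↥A, ∀ a : ↥A, D a = brk a0 a) :
    ∃ (a0 : ↥A) (S T : ↥A →ₗ[K] ↥A) (a1 : ↥A) (k : K),
      (∀ a : ↥A, brE (x - ↑a0) (a : E) = 0) ∧
      (∀ e : E, brE (x - ↑a0) e = 0) ∧
      (∀ e : E, brE e (x - ↑a0) = 0) ∧
      (∀ a : ↥A, mulE (x - ↑a0) (a : E) = ((S a : ↥A) : E)) ∧
      (∀ a : ↥A, mulE (a : E) (x - ↑a0) = ((T a : ↥A) : E)) ∧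
      (mulE (x - ↑a0) (x - ↑a0) = ((a1 : ↥A) : E) + k • (x - ↑a0)) ∧
      (∀ a b : ↥A, S (circ a b) = circ (S a) b + circ a (S b) - circ (T a) b) ∧
      (∀ a b : ↥A, T (circ a b) - T (circ b a) = circ a (T b) - circ b (T a)) ∧
      (∀ a : ↥A, T (T a) = T (S a) - S (T a) + circ a a1 + k • T a) ∧
      (∀ a b : ↥A, circ (S a) b = circ (S b) a) ∧
      (∀ a b : ↥A, T (circ a b) = circ (T a) b) ∧
      (∀ a : ↥A, T (S a) = circ a1 a + k • S a) ∧
      (∀ a b : ↥A, brk a (T b) + T (brk b a) = 0) ∧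
      (∀ a b : ↥A, brk a (S b) - brk b (S a) - S (brk a b) = 0) ∧
      (∀ a : ↥A, brk a a1 = 0) := by
  have N1 : ∀ u v w : E, mulE (mulE u v) w - mulE u (mulE v w)
      = mulE (mulE v u) w - mulE v (mulE u w) := hsGD.1.1
  have N2 : ∀ u v w : E, mulE (mulE u v) w = mulE (mulE u w) v := hsGD.1.2
  have Alt : ∀ u : E, brE u u = 0 := hsGD.2.1.1
  have Jac : ∀ u v w : E, brE u (brE v w) = brE (brE u v) w + brE v (brE u w) := hsGD.2.1.2
  have C : ∀ u v w : E, brE u (mulE v w) - brE w (mulE v u) + mulE (brE v u) w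
      - mulE (brE v w) u - mulE v (brE u w) = 0 := hsGD.2.2
  have hm : ∀ a b : ↥A, mulE a b = ((circ a b : ↥A) : E) := fun a b => (hres a b).1
  have hb : ∀ a b : ↥A, brE a b = ((brk a b : ↥A) : E) := fun a b => (hres a b).2
  have hanti : ∀ u v : E, brE u v = - brE v u := by
    intro u v
    have h := Alt (u + v)
    have hu : brE u u = 0 := Alt u
    have hv : brE v v = 0 := Alt v
    simp only [map_add, LinearMap.add_apply] at h
    rw [hu, hv] at h
    linear_combination (norm := module) h
  -- eta = 0
  have hη : ∀ a : ↥A, co hx0 hc (brE x (a : E)) = 0 := by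
    have hext : (co hx0 hc ∘ₗ (brE x) ∘ₗ A.subtype) = 0 := by
      apply LinearMap.ext_on hperf
      rintro _ ⟨a, b, rfl⟩
      simp only [LinearMap.comp_apply, Submodule.coe_subtype, LinearMap.zero_apply]
      rw [← hb a b]
      have jac := Jac x (a : E) (b : E)
      rw [jac]
      set e1 := brE x (a : E) with he1
      set e2 := brE x (b : E) with he2
      have k1 : co hx0 hc (brE e1 (b : E)) = co hx0 hc e1 * co hx0 hc e2 := by
        rw [← decomp hx0 hc e1]
        simp only [map_add, map_smul, LinearMap.add_apply, LinearMap.smul_apply]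
        rw [hb (pr hc e1) b]
        simp [he2, smul_eq_mul]
      have k2 : co hx0 hc (brE (a : E) e2) = - (co hx0 hc e2 * co hx0 hc e1) := by
        rw [← decomp hx0 hc e2]
        simp only [map_add, map_smul, LinearMap.add_apply, LinearMap.smul_apply]
        rw [hb a (pr hc e2), hanti (a : E) x]
        simp [he1, smul_eq_mul]
      simp only [map_add, k1, k2]
      ring
    intro a
    exact congrFun (congrArg (fun f => f.toFun) hext) a
  -- D and a0
  have hDmem : ∀ a : ↥A, brE x (a : E) ∈ A := fun a => (mem_iff hx0 hc _).mpr (hη a)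
  set Dm : ↥A →ₗ[K] ↥A :=
    LinearMap.codRestrict A ((brE x) ∘ₗ A.subtype) (fun a => hDmem a) with hDmdef
  have hDm : ∀ a : ↥A, brE x (a : E) = ((Dm a : ↥A) : E) := fun a => rfl
  have hDder : ∀ a b : ↥A, Dm (brk a b) = brk (Dm a) b + brk a (Dm b) := by
    intro a b
    have h1 : ((Dm (brk a b) : ↥A) : E) = ((brk (Dm a) b + brk a (Dm b) : ↥A) : E) := by
      rw [← hDm, ← hb a b, Jac x (a : E) (b : E), hDm a, hDm b, hb, hb]
      push_cast; ring
    exact_mod_cast h1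
  obtain ⟨a0, ha0⟩ := hder Dm hDder
  set y : E := x - (a0 : E) with hy
  have hxy : x = y + (a0 : E) := by rw [hy]; abel
  have hbyA : ∀ a : ↥A, brE y (a : E) = 0 := by
    intro a
    have h1 : brE y (a : E) = brE x (a : E) - brE (a0 : E) (a : E) := by
      rw [hy]; simp [map_sub]
    rw [h1, hDm a, hb a0 a, ha0 a, sub_self]
  have h3 : brE y x = 0 := by
    have h4 : brE y (y + (a0 : E)) = 0 := by rw [map_add, Alt y, hbyA a0, add_zero]
    rwa [← hxy] at h4
  have hby : ∀ e : E, brE y e = 0 := by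
    intro e
    have hd := decomp hx0 hc e
    rw [← hd, map_add, map_smul, hbyA, h3, smul_zero, add_zero]
  have hby' : ∀ e : E, brE e y = 0 := fun e => by rw [hanti, hby, neg_zero]
  have hcoA : ∀ (a : ↥A) (e : E), co hx0 hc (brE (a : E) e) = 0 := by
    intro a e
    rw [← decomp hx0 hc e, map_add, map_smul, map_add, map_smul]
    rw [hb a (pr hc e), hanti (a : E) x, hDm a]
    simp
  -- q = 0
  have hq : ∀ a : ↥A, co hx0 hc (mulE (a : E) y) = 0 := by
    have hext : (co hx0 hc ∘ₗ (mulE.flip y) ∘ₗ A.subtype) = 0 := by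
      apply LinearMap.ext_on hperf
      rintro _ ⟨b, c, rfl⟩
      simp only [LinearMap.comp_apply, Submodule.coe_subtype, LinearMap.zero_apply,
        LinearMap.flip_apply]
      have hC := C y (b : E) (c : E)
      simp only [hby, hby', hb b c, map_zero, LinearMap.zero_apply, zero_sub, sub_zero,
        map_zero, zero_add, add_zero] at hC
      have h2 : mulE ((brk b c : ↥A) : E) y = - brE (c : E) (mulE (b : E) y) := by
        linear_combination (norm := module) -hC
      rw [h2, map_neg, hcoA, neg_zero]
    intro a
    exact congrFun (congrArg (fun f => f.toFun) hext) a
  -- p = 0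
  have hp : ∀ a : ↥A, co hx0 hc (mulE y (a : E)) = 0 := by
    have hext : (co hx0 hc ∘ₗ (mulE y) ∘ₗ A.subtype) = 0 := by
      apply LinearMap.ext_on hperf
      rintro _ ⟨b, c, rfl⟩
      simp only [LinearMap.comp_apply, Submodule.coe_subtype, LinearMap.zero_apply]
      have hC := C (b : E) y (c : E)
      simp only [hby, hby', hb b c, map_zero, LinearMap.zero_apply, sub_zero, zero_sub,
        add_zero, zero_add] at hC
      have h2 : mulE y ((brk b c : ↥A) : E)
          = brE (b : E) (mulE y (c : E)) - brE (c : E) (mulE y (b : E)) := by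
        linear_combination (norm := module) -hC
      rw [h2, map_sub, hcoA, hcoA, sub_zero]
    intro a
    exact congrFun (congrArg (fun f => f.toFun) hext) a
  -- S, T, a1, k
  set Sf : ↥A →ₗ[K] ↥A :=
    LinearMap.codRestrict A ((mulE y) ∘ₗ A.subtype)
      (fun a => (mem_iff hx0 hc _).mpr (hp a)) with hSfdef
  set Tf : ↥A →ₗ[K] ↥A :=
    LinearMap.codRestrict A ((mulE.flip y) ∘ₗ A.subtype)
      (fun a => (mem_iff hx0 hc _).mpr (hq a)) with hTfdef
  have hSf : ∀ a : ↥A, mulE y (a : E) = ((Sf a : ↥A) : E) := fun a => rfl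
  have hTf : ∀ a : ↥A, mulE (a : E) y = ((Tf a : ↥A) : E) := fun a => rfl
  set kk : K := co hx0 hc (mulE y y) with hkk
  set A1 : ↥A := pr hc (mulE y y) + kk • a0 with hA1
  have hyy : mulE y y = ((A1 : ↥A) : E) + kk • y := by
    have hd := decomp hx0 hc (mulE y y)
    rw [← hkk] at hd
    rw [hA1]
    push_cast
    linear_combination (norm := module) hd.symm + kk • hxy
  refine ⟨a0, Sf, Tf, A1, kk, hbyA, hby, hby', hSf, hTf, hyy, ?_, ?_, ?_, ?_, ?_, ?_, ?_, ?_, ?_⟩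
  · -- c2 : FN2
    intro a b
    have h := N1 y (a : E) (b : E)
    rw [hSf a, hm a b, hTf a] at h
    have h2 : mulE ((Sf a : ↥A) : E) (b : E) - mulE y ((circ a b : ↥A) : E)
        = mulE ((Tf a : ↥A) : E) (b : E) - mulE (a : E) (mulE y (b : E)) := h
    rw [hSf b, hm (Sf a) b, hSf (circ a b), hm (Tf a) b, hm a (Sf b)] at h2
    have h3 : ((Sf (circ a b) : ↥A) : E)
        = ((circ (Sf a) b + circ a (Sf b) - circ (Tf a) b : ↥A) : E) := by
      push_cast
      linear_combination (norm := module) -h2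
    exact_mod_cast h3
  · -- c3 : FN3
    intro a b
    have h := N1 (a : E) (b : E) y
    rw [hm a b, hTf b, hm b a, hTf a] at h
    rw [hTf (circ a b), hm a (Tf b), hTf (circ b a), hm b (Tf a)] at h
    have h3 : ((Tf (circ a b) - Tf (circ b a) : ↥A) : E)
        = ((circ a (Tf b) - circ b (Tf a) : ↥A) : E) := by
      push_cast
      linear_combination (norm := module) h
    exact_mod_cast h3
  · -- c4 : FN4
    intro a
    have h := N1 (a : E) y y
    simp only [hyy, map_add, map_smul, hTf, hSf, hm] at h
    have h3 : ((Tf (Tf a) : ↥A) : E)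
        = ((Tf (Sf a) - Sf (Tf a) + circ a A1 + kk • Tf a : ↥A) : E) := by
      push_cast
      linear_combination (norm := module) h
    exact_mod_cast h3
  · -- c6 : FN6
    intro a b
    have h := N2 y (a : E) (b : E)
    rw [hSf a, hSf b, hm (Sf a) b, hm (Sf b) a] at h
    exact_mod_cast h
  · -- c7 : FN7
    intro a b
    have h := N2 (a : E) y (b : E)
    rw [hTf a, hm (Tf a) b, hm a b, hTf (circ a b)] at h
    exact_mod_cast h.symm
  · -- c9 : FN9
    intro a
    have h := N2 y (a : E) y
    simp only [hyy, map_add, map_smul, LinearMap.add_apply, LinearMap.smul_apply,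
      hTf, hSf, hm] at h
    have h3 : ((Tf (Sf a) : ↥A) : E) = ((circ A1 a + kk • Sf a : ↥A) : E) := by
      push_cast
      linear_combination (norm := module) h
    exact_mod_cast h3
  · -- cg1 : GF1
    intro a b
    have h := C (a : E) (b : E) y
    simp only [hby, hby', hTf, hm, hb, map_zero, LinearMap.zero_apply, sub_zero,
      zero_sub, add_zero, zero_add] at h
    have h3 : ((brk a (Tf b) + Tf (brk b a) : ↥A) : E) = ((0 : ↥A) : E) := by
      push_cast
      have h4 := h
      linear_combination (norm := module) h4
    exact_mod_cast h3
  · -- cg3 : GF3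
    intro a b
    have h := C (a : E) y (b : E)
    simp only [hby, hby', hSf, hm, hb, map_zero, LinearMap.zero_apply, sub_zero,
      zero_sub, add_zero, zero_add] at h
    have h3 : ((brk a (Sf b) - brk b (Sf a) - Sf (brk a b) : ↥A) : E) = ((0 : ↥A) : E) := by
      push_cast
      have h4 := h
      linear_combination (norm := module) h4
    exact_mod_cast h3
  · -- cg5 : GF5
    intro a
    have h := C (a : E) y y
    simp only [hyy, hby, hby', map_add, map_smul, hb, map_zero, LinearMap.zero_apply,
      sub_zero, zero_sub, add_zero, zero_add, smul_zero] at h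
    have h3 : ((brk a A1 : ↥A) : E) = ((0 : ↥A) : E) := by
      push_cast
      have h4 := h
      linear_combination (norm := module) h4
    exact_mod_cast h3
end Psi

section Tw
variable {K E : Type*} [Field K] [AddCommGroup E] [Module K E]
variable {A : Submodule K E} {x : E}
variable (hx0 : x ≠ 0) (hc : IsCompl A (K ∙ x))

noncomputable def twl (b0 : ↥A) (β : K) : E →ₗ[K] E :=
  A.subtype ∘ₗ pr hc + (LinearMap.toSpanSingleton K E (b0 : E)) ∘ₗ (co hx0 hc)
    + β • ((LinearMap.toSpanSingleton K E x) ∘ₗ (co hx0 hc))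

lemma twl_apply (b0 : ↥A) (β : K) (e : E) :
    twl hx0 hc b0 β e = ((pr hc e : A) : E) + co hx0 hc e • (b0 : E)
      + (β * co hx0 hc e) • x := by
  simp [twl, LinearMap.toSpanSingleton_apply, mul_comm, smul_smul]

@[simp] lemma twl_coe (b0 : ↥A) (β : K) (a : ↥A) :
    twl hx0 hc b0 β (a : E) = (a : E) := by
  simp [twl_apply]

@[simp] lemma twl_x (b0 : ↥A) (β : K) :
    twl hx0 hc b0 β x = (b0 : E) + β • x := by
  simp [twl_apply]

lemma twl_twl (b0 c0 : ↥A) (β γ : K) (hββ : γ * β = 1) (hbb : (b0 : E) + β • (c0 : E) = 0)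
    (e : E) : twl hx0 hc c0 γ (twl hx0 hc b0 β e) = e := by
  have hd := decomp hx0 hc e
  have hx2 : ((γ * β) * co hx0 hc e) • x = (1 * co hx0 hc e) • x := by rw [hββ]
  rw [twl_apply hx0 hc b0 β e, twl_apply]
  simp only [map_add, map_smul, pr_coe, pr_x, co_coe, co_x, smul_zero, add_zero,
    mul_zero, mul_one, zero_add, smul_eq_mul]
  push_cast
  linear_combination (norm := module) hd + (co hx0 hc e) • hbb + hx2

noncomputable def tw (b0 : ↥A) (β : K) (hβ : β ≠ 0) : E ≃ₗ[K] E :=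
  LinearEquiv.ofLinear (twl hx0 hc b0 β) (twl hx0 hc (-β⁻¹ • b0) β⁻¹)
    (by
      ext e
      simp only [LinearMap.comp_apply, LinearMap.id_apply]
      apply twl_twl hx0 hc _ _ β⁻¹ β (by field_simp)
      push_cast
      module)
    (by
      ext e
      simp only [LinearMap.comp_apply, LinearMap.id_apply]
      apply twl_twl hx0 hc b0 (-β⁻¹ • b0) β β⁻¹ (by field_simp)
      push_cast
      rw [smul_smul]
      simp [mul_inv_cancel₀ hβ])

@[simp] lemma tw_coe (b0 : ↥A) (β : K) (hβ : β ≠ 0) (a : ↥A) :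
    tw hx0 hc b0 β hβ (a : E) = (a : E) := twl_coe hx0 hc b0 β a

@[simp] lemma tw_x (b0 : ↥A) (β : K) (hβ : β ≠ 0) :
    tw hx0 hc b0 β hβ x = (b0 : E) + β • x := twl_x hx0 hc b0 β
end Tw

set_option maxHeartbeats 4000000 in
/-- Corollary, part 2: if the Lie algebra `(A,[·,·])` is perfect and all its
derivations are inner, then `Extd(E,A)` is in bijection with `SF4(A)/≡`. -/
theorem extd_bijection_SF4
    {K E : Type*} [Field K] [AddCommGroup E] [Module K E]
    (A : Submodule K E) (x : E) (hx : x ∉ A) (hc : IsCompl A (K ∙ x))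
    (circ brk : ↥A →ₗ[K] ↥A →ₗ[K] ↥A)
    (hGD : IsGD (fun a b => circ a b) (fun a b => brk a b))
    -- the Lie algebra (A, [·,·]) is perfect
    (hperf : Submodule.span K {c : ↥A | ∃ a b : ↥A, c = brk a b} = ⊤)
    -- all derivations of (A, [·,·]) are inner
    (hder : ∀ D : ↥A →ₗ[K] ↥A,
      (∀ a b : ↥A, D (brk a b) = brk (D a) b + brk a (D b)) →
      ∃ a0 : ↥A, ∀ a : ↥A, D a = brk a0 a) :
    Nonempty
      (Quot (fun d d' : {d : FlagData K ↥A // IsFlagDatum circ brk d ∧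
               d.p = 0 ∧ d.q = 0 ∧ d.eta = 0 ∧ d.D = 0} =>
          -- equivalence on SF4(A)
          ∃ (a0 : ↥A) (β : K), β ≠ 0 ∧
            (∀ a : ↥A, d.1.S a = β • d'.1.S a + circ a0 a) ∧
            (∀ a : ↥A, d.1.T a = β • d'.1.T a + circ a a0) ∧
            (d.1.a1 = circ a0 a0 + β • d'.1.S a0 + β • d'.1.T a0
              + (β * β) • d'.1.a1 - d.1.k • a0) ∧
            (d.1.k = β * d'.1.k) ∧
            (∀ a : ↥A, brk a0 a = 0))
      ≃ Quot (GDStrEquiv A circ brk)) := by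
  classical
  have hx0 : x ≠ 0 := fun h => hx (h ▸ A.zero_mem)
  -- A-level antisymmetry of the bracket
  have hAanti : ∀ a b : ↥A, brk a b = - brk b a := by
    intro a b
    have h := hGD.2.1.1 (a + b)
    have hu : brk a a = 0 := hGD.2.1.1 a
    have hv : brk b b = 0 := hGD.2.1.1 b
    simp only [map_add, LinearMap.add_apply] at h
    rw [hu, hv] at h
    linear_combination (norm := module) h
  -- The structure associated to a reduced flag datum
  have PhiP : ∀ d : {d : FlagData K ↥A // IsFlagDatum circ brk d ∧
      d.p = 0 ∧ d.q = 0 ∧ d.eta = 0 ∧ d.D = 0},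
      IsGD (fun u v => phiMul hx0 hc circ d.1.S d.1.T d.1.a1 d.1.k u v)
        (fun u v => phiBr hc brk u v) ∧
      ∀ a b : ↥A, phiMul hx0 hc circ d.1.S d.1.T d.1.a1 d.1.k (a : E) (b : E)
          = ((circ a b : ↥A) : E) ∧ phiBr hc brk (a : E) (b : E) = ((brk a b : ↥A) : E) := by
    intro d
    obtain ⟨h2, h3, h4, h6, h7, h9, g1, g3, g5⟩ :=
      reduced_conditions circ brk d.1 d.2.1 d.2.2.1 d.2.2.2.1 d.2.2.2.2.1 d.2.2.2.2.2
    refine ⟨phi_isGD hx0 hc circ brk d.1.S d.1.T d.1.a1 d.1.k hGD h2 h3 h4 h6 h7 h9 g1 g3 g5,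
      fun a b => ⟨phiMul_cc hx0 hc circ d.1.S d.1.T d.1.a1 d.1.k a b, phiBr_cc hc brk a b⟩⟩
  let Phi : {d : FlagData K ↥A // IsFlagDatum circ brk d ∧
      d.p = 0 ∧ d.q = 0 ∧ d.eta = 0 ∧ d.D = 0} → GDStrOn A circ brk :=
    fun d => ⟨(phiMul hx0 hc circ d.1.S d.1.T d.1.a1 d.1.k, phiBr hc brk), PhiP d⟩
  -- extraction data for each structure
  choose a0F SFF TFF a1F kF P1 P2 P3 P4 P5 P6 C2 C3 C4 C6 C7 C9 G1 G3 G5 using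
    fun s : GDStrOn A circ brk =>
      extract hx0 hc circ brk s.1.1 s.1.2 s.2.1 s.2.2 hperf hder
  let Psi : GDStrOn A circ brk → {d : FlagData K ↥A // IsFlagDatum circ brk d ∧
      d.p = 0 ∧ d.q = 0 ∧ d.eta = 0 ∧ d.D = 0} :=
    fun s => ⟨⟨0, 0, SFF s, TFF s, a1F s, kF s, 0, 0⟩,
      isFlagDatum_of circ brk (SFF s) (TFF s) (a1F s) (kF s)
        (C2 s) (C3 s) (C4 s) (C6 s) (C7 s) (C9 s) (G1 s) (G3 s) (G5 s),
      rfl, rfl, rfl, rfl⟩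
  refine ⟨⟨Quot.lift (fun d => Quot.mk _ (Phi d)) ?_,
    Quot.lift (fun s => Quot.mk _ (Psi s)) ?_, ?_, ?_⟩⟩
  · -- toFun soundness
    rintro d d' ⟨a0, β, hβ, hS, hT, ha1, hk, hbr⟩
    apply Quot.sound
    have eS : ∀ a : ↥A, ((d.1.S a : ↥A) : E)
        = β • ((d'.1.S a : ↥A) : E) + ((circ a0 a : ↥A) : E) := fun a => by
      exact_mod_cast congrArg Subtype.val (hS a)
    have eT : ∀ a : ↥A, ((d.1.T a : ↥A) : E)
        = β • ((d'.1.T a : ↥A) : E) + ((circ a a0 : ↥A) : E) := fun a => by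
      exact_mod_cast congrArg Subtype.val (hT a)
    have ha1' := ha1
    rw [hk] at ha1'
    have ea1 : ((d.1.a1 : ↥A) : E) = ((circ a0 a0 : ↥A) : E) + β • ((d'.1.S a0 : ↥A) : E)
        + β • ((d'.1.T a0 : ↥A) : E) + (β * β) • ((d'.1.a1 : ↥A) : E)
        - (β * d'.1.k) • ((a0 : ↥A) : E) := by
      exact_mod_cast congrArg Subtype.val ha1'
    have ebr : ∀ a : ↥A, ((brk a0 a : ↥A) : E) = 0 := fun a => by
      exact_mod_cast congrArg Subtype.val (hbr a)
    have ebr' : ∀ a : ↥A, ((brk a a0 : ↥A) : E) = 0 := fun a => by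
      have h0 : brk a a0 = 0 := by rw [hAanti a a0, hbr a, neg_zero]
      exact_mod_cast congrArg Subtype.val h0
    refine ⟨tw hx0 hc a0 β hβ, ?_, ?_, fun a => tw_coe hx0 hc a0 β hβ a⟩
    · have key : ∀ (a b : ↥A) (s t : K),
          tw hx0 hc a0 β hβ
              (phiMul hx0 hc circ d.1.S d.1.T d.1.a1 d.1.k ((a:E)+s•x) ((b:E)+t•x))
          = phiMul hx0 hc circ d'.1.S d'.1.T d'.1.a1 d'.1.k
              (tw hx0 hc a0 β hβ ((a:E)+s•x)) (tw hx0 hc a0 β hβ ((b:E)+t•x)) := by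
        intro a b s t
        simp only [map_add, map_smul, LinearMap.add_apply, LinearMap.smul_apply,
          phiMul_cc, phiMul_xc, phiMul_cx, phiMul_xx, tw_coe, tw_x, smul_add, smul_smul]
        rw [hk]
        linear_combination (norm := module) s • eS b + t • eT a + (s*t) • ea1
      intro u v
      have h := key (pr hc u) (pr hc v) (co hx0 hc u) (co hx0 hc v)
      rw [decomp hx0 hc u, decomp hx0 hc v] at h
      exact h
    · have key : ∀ (a b : ↥A) (s t : K),
          tw hx0 hc a0 β hβ (phiBr hc brk ((a:E)+s•x) ((b:E)+t•x))
          = phiBr hc brk (tw hx0 hc a0 β hβ ((a:E)+s•x)) (tw hx0 hc a0 β hβ ((b:E)+t•x)) := by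
        intro a b s t
        simp only [map_add, map_smul, LinearMap.add_apply, LinearMap.smul_apply,
          phiBr_cc, phiBr_xc, phiBr_cx, phiBr_xx, tw_coe, tw_x, smul_add, smul_smul,
          smul_zero, add_zero, zero_add]
        linear_combination (norm := module) (-s) • ebr b - t • ebr' a - (s*t) • ebr a0
      intro u v
      have h := key (pr hc u) (pr hc v) (co hx0 hc u) (co hx0 hc v)
      rw [decomp hx0 hc u, decomp hx0 hc v] at h
      exact h
  · -- invFun soundness
    intro s s' hss
    obtain ⟨φ, hφm, hφb, hφA⟩ := hss
    apply Quot.sound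
    obtain ⟨b0, γ, hφx⟩ : ∃ (b0 : ↥A) (γ : K), φ x = (b0 : E) + γ • x :=
      ⟨_, _, (decomp hx0 hc (φ x)).symm⟩
    have hφA' : ∀ a : ↥A, φ.symm (a : E) = (a : E) := by
      intro a
      apply φ.injective
      rw [φ.apply_symm_apply, hφA]
    have hγ : γ ≠ 0 := by
      intro h0
      apply hx
      have h1 : φ x = (b0 : E) := by rw [hφx, h0, zero_smul, add_zero]
      have h2 : x = (b0 : E) := by
        have h3 := congrArg φ.symm h1
        rwa [φ.symm_apply_apply, hφA' b0] at h3
      rw [h2]; exact b0.2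
    have hys' : x - ((a0F s' : ↥A) : E) ∉ A := by
      intro hmem
      apply hx
      have h4 : (x - ((a0F s' : ↥A) : E)) + ((a0F s' : ↥A) : E) = x := by abel
      rw [← h4]
      exact A.add_mem hmem (a0F s').2
    have hφy : φ (x - ((a0F s : ↥A) : E))
        = ((b0 - a0F s + γ • a0F s' : ↥A) : E) + γ • (x - ((a0F s' : ↥A) : E)) := by
      rw [map_sub, hφx, hφA (a0F s)]
      push_cast
      module
    have hm' : ∀ a b : ↥A, s'.1.1 (a : E) (b : E) = ((circ a b : ↥A) : E) :=
      fun a b => (s'.2.2 a b).1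
    have hb' : ∀ a b : ↥A, s'.1.2 (a : E) (b : E) = ((brk a b : ↥A) : E) :=
      fun a b => (s'.2.2 a b).2
    have hSrel : ∀ a : ↥A, SFF s a
        = γ • SFF s' a + circ (b0 - a0F s + γ • a0F s') a := by
      intro a
      have h := hφm (x - ((a0F s : ↥A) : E)) (a : E)
      rw [P4 s a] at h
      simp only [hφA, hφy, map_add, LinearMap.add_apply, map_smul,
        LinearMap.smul_apply, hm', P4 s'] at h
      have h8 : ((SFF s a : ↥A) : E)
          = ((γ • SFF s' a + circ (b0 - a0F s + γ • a0F s') a : ↥A) : E) := by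
        push_cast
        simp only [map_add, map_sub, map_smul, LinearMap.add_apply, LinearMap.sub_apply,
          LinearMap.smul_apply]
        push_cast
        simp only [map_add, map_sub, map_smul, LinearMap.add_apply, LinearMap.sub_apply,
          LinearMap.smul_apply] at h
        push_cast at h
        linear_combination (norm := module) h
      exact_mod_cast h8
    have hTrel : ∀ a : ↥A, TFF s a
        = γ • TFF s' a + circ a (b0 - a0F s + γ • a0F s') := by
      intro a
      have h := hφm (a : E) (x - ((a0F s : ↥A) : E))
      rw [P5 s a] at h
      simp only [hφA, hφy, map_add, LinearMap.add_apply, map_smul,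
        LinearMap.smul_apply, hm', P5 s'] at h
      have h8 : ((TFF s a : ↥A) : E)
          = ((γ • TFF s' a + circ a (b0 - a0F s + γ • a0F s') : ↥A) : E) := by
        push_cast
        simp only [map_add, map_sub, map_smul, LinearMap.add_apply, LinearMap.sub_apply,
          LinearMap.smul_apply]
        push_cast
        simp only [map_add, map_sub, map_smul, LinearMap.add_apply, LinearMap.sub_apply,
          LinearMap.smul_apply] at h
        push_cast at h
        linear_combination (norm := module) h
      exact_mod_cast h8
    have h := hφm (x - ((a0F s : ↥A) : E)) (x - ((a0F s : ↥A) : E))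
    rw [P6 s] at h
    simp only [hφA, hφy, map_add, LinearMap.add_apply, map_smul,
      LinearMap.smul_apply, hm', P4 s', P5 s', P6 s'] at h
    have h2 : ((a1F s + kF s • (b0 - a0F s + γ • a0F s') : ↥A) : E)
          + (kF s * γ) • (x - ((a0F s' : ↥A) : E))
        = ((circ (b0 - a0F s + γ • a0F s') (b0 - a0F s + γ • a0F s')
            + γ • SFF s' (b0 - a0F s + γ • a0F s') + γ • TFF s' (b0 - a0F s + γ • a0F s')
            + (γ * γ) • a1F s' : ↥A) : E)
          + (γ * (γ * kF s')) • (x - ((a0F s' : ↥A) : E)) := by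
      simp only [map_add, map_sub, map_smul, LinearMap.add_apply, LinearMap.sub_apply,
        LinearMap.smul_apply, smul_add, smul_sub, smul_smul] at h
      push_cast at h
      push_cast
      simp only [map_add, map_sub, map_smul, LinearMap.add_apply, LinearMap.sub_apply,
        LinearMap.smul_apply, smul_add, smul_sub, smul_smul]
      push_cast
      linear_combination (norm := module) h
    obtain ⟨hA1, hkγ⟩ := eq_of_decomp' hys' h2
    have hkrel : kF s = γ * kF s' := by
      have h5 : kF s * γ = (γ * kF s') * γ := by linear_combination hkγ
      exact mul_right_cancel₀ hγ h5
    have ha1rel : a1F s = circ (b0 - a0F s + γ • a0F s') (b0 - a0F s + γ • a0F s')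
        + γ • SFF s' (b0 - a0F s + γ • a0F s') + γ • TFF s' (b0 - a0F s + γ • a0F s')
        + (γ * γ) • a1F s' - kF s • (b0 - a0F s + γ • a0F s') := by
      linear_combination (norm := module) hA1
    have hbrrel : ∀ a : ↥A, brk (b0 - a0F s + γ • a0F s') a = 0 := by
      intro a
      have h6 := hφb (x - ((a0F s : ↥A) : E)) (a : E)
      rw [P2 s, map_zero, hφA a, hφy, map_add, LinearMap.add_apply, map_smul,
        LinearMap.smul_apply, hb', P1 s' a, smul_zero, add_zero] at h6
      exact_mod_cast h6.symm
    exact ⟨b0 - a0F s + γ • a0F s', γ, hγ, hSrel, hTrel, ha1rel, hkrel, hbrrel⟩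
  · -- left inverse
    intro q
    induction q using Quot.ind with
    | _ d =>
    show Quot.mk _ (Psi (Phi d)) = Quot.mk _ d
    apply Quot.sound
    have hyA : x - ((a0F (Phi d) : ↥A) : E) ∉ A := by
      intro hmem
      apply hx
      have h4 : (x - ((a0F (Phi d) : ↥A) : E)) + ((a0F (Phi d) : ↥A) : E) = x := by abel
      rw [← h4]
      exact A.add_mem hmem (a0F (Phi d)).2
    have hS1 : ∀ a : ↥A, SFF (Phi d) a = d.1.S a - circ (a0F (Phi d)) a := by
      intro a
      have h := P4 (Phi d) a
      have hL : (Phi d).1.1 (x - ((a0F (Phi d) : ↥A) : E)) (a : E)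
          = ((d.1.S a - circ (a0F (Phi d)) a : ↥A) : E) := by
        show phiMul hx0 hc circ d.1.S d.1.T d.1.a1 d.1.k
            (x - ((a0F (Phi d) : ↥A) : E)) (a : E) = _
        rw [map_sub, LinearMap.sub_apply, phiMul_xc, phiMul_cc]
        push_cast
        abel
      rw [hL] at h
      exact_mod_cast h.symm
    have hT1 : ∀ a : ↥A, TFF (Phi d) a = d.1.T a - circ a (a0F (Phi d)) := by
      intro a
      have h := P5 (Phi d) a
      have hL : (Phi d).1.1 (a : E) (x - ((a0F (Phi d) : ↥A) : E))
          = ((d.1.T a - circ a (a0F (Phi d)) : ↥A) : E) := by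
        show phiMul hx0 hc circ d.1.S d.1.T d.1.a1 d.1.k
            (a : E) (x - ((a0F (Phi d) : ↥A) : E)) = _
        rw [map_sub, phiMul_cx, phiMul_cc]
        push_cast
        abel
      rw [hL] at h
      exact_mod_cast h.symm
    have hbr1 : ∀ a : ↥A, brk (a0F (Phi d)) a = 0 := by
      intro a
      have h := P1 (Phi d) a
      have hL : (Phi d).1.2 (x - ((a0F (Phi d) : ↥A) : E)) (a : E)
          = - ((brk (a0F (Phi d)) a : ↥A) : E) := by
        show phiBr hc brk (x - ((a0F (Phi d) : ↥A) : E)) (a : E) = _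
        rw [map_sub, LinearMap.sub_apply, phiBr_xc, phiBr_cc, zero_sub]
      rw [hL] at h
      have h2 : ((brk (a0F (Phi d)) a : ↥A) : E) = ((0 : ↥A) : E) := by
        push_cast
        linear_combination (norm := module) -h
      exact_mod_cast h2
    have hL6 : (Phi d).1.1 (x - ((a0F (Phi d) : ↥A) : E)) (x - ((a0F (Phi d) : ↥A) : E))
        = ((d.1.a1 - d.1.T (a0F (Phi d)) - d.1.S (a0F (Phi d))
            + circ (a0F (Phi d)) (a0F (Phi d)) + d.1.k • (a0F (Phi d)) : ↥A) : E)
          + d.1.k • (x - ((a0F (Phi d) : ↥A) : E)) := by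
      show phiMul hx0 hc circ d.1.S d.1.T d.1.a1 d.1.k
          (x - ((a0F (Phi d) : ↥A) : E)) (x - ((a0F (Phi d) : ↥A) : E)) = _
      simp only [map_sub, LinearMap.sub_apply, phiMul_xx, phiMul_xc, phiMul_cx, phiMul_cc]
      push_cast
      module
    obtain ⟨hA1d, hkd⟩ := eq_of_decomp' hyA (hL6.symm.trans (P6 (Phi d)))
    refine ⟨-(a0F (Phi d)), 1, one_ne_zero, ?_, ?_, ?_, ?_, ?_⟩
    · intro a
      show SFF (Phi d) a = (1 : K) • d.1.S a + circ (-(a0F (Phi d))) a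
      rw [hS1 a]
      simp only [one_smul, map_neg, LinearMap.neg_apply, sub_eq_add_neg]
    · intro a
      show TFF (Phi d) a = (1 : K) • d.1.T a + circ a (-(a0F (Phi d)))
      rw [hT1 a]
      simp only [one_smul, map_neg, sub_eq_add_neg]
    · show a1F (Phi d) = circ (-(a0F (Phi d))) (-(a0F (Phi d)))
          + (1 : K) • d.1.S (-(a0F (Phi d))) + (1 : K) • d.1.T (-(a0F (Phi d)))
          + ((1 : K) * 1) • d.1.a1 - kF (Phi d) • (-(a0F (Phi d)))
      rw [← hA1d, ← hkd]
      simp only [map_neg, LinearMap.neg_apply, neg_neg, one_smul, one_mul, smul_neg,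
        sub_neg_eq_add]
      module
    · show kF (Phi d) = 1 * d.1.k
      rw [← hkd, one_mul]
    · intro a
      show brk (-(a0F (Phi d))) a = 0
      rw [map_neg, LinearMap.neg_apply, hbr1 a, neg_zero]
  · -- right inverse
    intro q
    induction q using Quot.ind with
    | _ s =>
    show Quot.mk _ (Phi (Psi s)) = Quot.mk _ s
    apply Quot.sound
    have hm0 : ∀ a b : ↥A, s.1.1 (a : E) (b : E) = ((circ a b : ↥A) : E) :=
      fun a b => (s.2.2 a b).1
    have hb0 : ∀ a b : ↥A, s.1.2 (a : E) (b : E) = ((brk a b : ↥A) : E) :=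
      fun a b => (s.2.2 a b).2
    have htw : ∀ (c : ↥A) (r : K), tw hx0 hc (-(a0F s)) 1 one_ne_zero ((c : E) + r • x)
        = (c : E) + r • (x - ((a0F s : ↥A) : E)) := by
      intro c r
      rw [map_add, map_smul, tw_coe, tw_x]
      push_cast
      module
    refine ⟨tw hx0 hc (-(a0F s)) 1 one_ne_zero, ?_, ?_,
      fun a => tw_coe hx0 hc _ 1 one_ne_zero a⟩
    · have key : ∀ (a b : ↥A) (r t : K),
          tw hx0 hc (-(a0F s)) 1 one_ne_zero
            (phiMul hx0 hc circ (SFF s) (TFF s) (a1F s) (kF s) ((a:E)+r•x) ((b:E)+t•x))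
          = s.1.1 (tw hx0 hc (-(a0F s)) 1 one_ne_zero ((a:E)+r•x))
              (tw hx0 hc (-(a0F s)) 1 one_ne_zero ((b:E)+t•x)) := by
        intro a b r t
        rw [htw, htw]
        simp only [map_add, map_smul, LinearMap.add_apply, LinearMap.smul_apply,
          phiMul_cc, phiMul_xc, phiMul_cx, phiMul_xx, tw_coe, tw_x, smul_add, smul_smul,
          hm0, P4 s, P5 s, P6 s]
        push_cast
        module
      intro u v
      have h := key (pr hc u) (pr hc v) (co hx0 hc u) (co hx0 hc v)
      rw [decomp hx0 hc u, decomp hx0 hc v] at h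
      exact h
    · have key : ∀ (a b : ↥A) (r t : K),
          tw hx0 hc (-(a0F s)) 1 one_ne_zero (phiBr hc brk ((a:E)+r•x) ((b:E)+t•x))
          = s.1.2 (tw hx0 hc (-(a0F s)) 1 one_ne_zero ((a:E)+r•x))
              (tw hx0 hc (-(a0F s)) 1 one_ne_zero ((b:E)+t•x)) := by
        intro a b r t
        rw [htw, htw]
        simp only [map_add, map_smul, LinearMap.add_apply, LinearMap.smul_apply,
          phiBr_cc, phiBr_xc, phiBr_cx, phiBr_xx, tw_coe, tw_x, smul_add, smul_smul,
          hb0, P1 s, P2 s, P3 s, smul_zero, add_zero, zero_add]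
      intro u v
      have h := key (pr hc u) (pr hc v) (co hx0 hc u) (co hx0 hc v)
      rw [decomp hx0 hc u, decomp hx0 hc v] at h
      exact h

end GDExt
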